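/- Let x, y be complex numbers with Re x < 0 and 0 < Re y < 1. Then the series Σ_{m≥0} t^{2m} ( (−y/2)ₘ ((1−x−y)/2)ₘ / (m! ((1−x)/2)ₘ) ) ∫₀^{1} s^{2m−1−x} (1−ts)^{−y} ds converges uniformly for t in the closed interval [0, 1] (powers being principal values). -/

import Mathlib

open Complex Filter Metric Finset

attribute [local instance] Classical.propDecidable

noncomputable section

/-- Condition on the summation variables of the level-two multiple polylogarithm:
`m` is strictly increasing, `m i ≡ i+1 (mod 2)` (so `m 0` is odd, `m 1` even, ...),
and all `m i` are positive. -/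
def athCond (n : ℕ) (m : Fin n → ℕ) : Prop :=
  StrictMono m ∧ ∀ i : Fin n, m i % 2 = ((i : ℕ) + 1) % 2 ∧ 0 < m i

/-- The last entry `m n` of the summation sequence (junk value `0` for depth `0`). -/
def lastExp {n : ℕ} (m : Fin n → ℕ) : ℕ :=
  if h : 0 < n then m ⟨n - 1, Nat.sub_lt h Nat.one_pos⟩ else 0

/-- The level-two multiple polylogarithm
`Ath(𝐤; t) = Σ_{0<m₁<⋯<mₙ, mᵢ ≡ i (2)} t^{mₙ}/(m₁^{k₁}⋯mₙ^{kₙ})`, with `Ath(∅;t) = 1`. -/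
def Ath {n : ℕ} (k : Fin n → ℕ) (t : ℂ) : ℂ :=
  ∑' m : Fin n → ℕ,
    if athCond n m then t ^ lastExp m / ∏ i, ((m i : ℂ) ^ k i) else 0

/-- The multiple T-value `T(𝐤) = 2^n Σ_{0<m₁<⋯<mₙ, mᵢ ≡ i (2)} 1/(m₁^{k₁}⋯mₙ^{kₙ})`. -/
def Tval {n : ℕ} (k : Fin n → ℕ) : ℝ :=
  2 ^ n * ∑' m : Fin n → ℕ,
    if athCond n m then (∏ i, ((m i : ℝ) ^ k i))⁻¹ else 0

/-- `κ` is an index of weight `k`, depth `n` and height `s`. -/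
def IdxCond (k n s : ℕ) (κ : Fin n → ℕ) : Prop :=
  (∀ i, 1 ≤ κ i) ∧ (∑ i, κ i) = k ∧ (Finset.univ.filter fun i => 2 ≤ κ i).card = s

/-- `κ` is an admissible index of weight `k`, depth `n` and height `s`. -/
def IdxCond0 (k n s : ℕ) (κ : Fin n → ℕ) : Prop :=
  IdxCond k n s κ ∧ ∀ h : 0 < n, 2 ≤ κ ⟨n - 1, Nat.sub_lt h Nat.one_pos⟩

/-- `G(k,n,s;t) = 2^n Σ_{𝐤 ∈ I(k,n,s)} Ath(𝐤;t)`. -/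
def G (k n s : ℕ) (t : ℂ) : ℂ :=
  2 ^ n * ∑' κ : Fin n → ℕ, if IdxCond k n s κ then Ath κ t else 0

/-- `G₀(k,n,s;t) = 2^n Σ_{𝐤 ∈ I₀(k,n,s)} Ath(𝐤;t)`. -/
def G0 (k n s : ℕ) (t : ℂ) : ℂ :=
  2 ^ n * ∑' κ : Fin n → ℕ, if IdxCond0 k n s κ then Ath κ t else 0

/-- `Σ_{𝐤 ∈ I₀(k,n,s)} T(𝐤)`. -/
def sumT0 (k n s : ℕ) : ℝ :=
  ∑' κ : Fin n → ℕ, if IdxCond0 k n s κ then Tval κ else 0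

/-- One term of the generating function `Φ`. -/
def PhiTerm (x y z : ℂ) (p : ℕ × ℕ × ℕ) (t : ℂ) : ℂ :=
  if 1 ≤ p.1 ∧ 1 ≤ p.2.1 then
    G p.1 p.2.1 p.2.2 t * x ^ (p.1 - p.2.1 - p.2.2) * y ^ (p.2.1 - p.2.2) * z ^ (2 * p.2.2)
  else 0

/-- `Φ(x,y,z;t) = 1 + Σ_{k,n≥1, s≥0} G(k,n,s;t) x^{k−n−s} y^{n−s} z^{2s}`. -/
def Phi (x y z t : ℂ) : ℂ := 1 + ∑' p : ℕ × ℕ × ℕ, PhiTerm x y z p t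

/-- One term of the generating function `Φ₀`. -/
def Phi0Term (x y z : ℂ) (p : ℕ × ℕ × ℕ) (t : ℂ) : ℂ :=
  if 1 ≤ p.1 ∧ 1 ≤ p.2.1 ∧ 1 ≤ p.2.2 then
    G0 p.1 p.2.1 p.2.2 t * x ^ (p.1 - p.2.1 - p.2.2) * y ^ (p.2.1 - p.2.2)
      * z ^ (2 * (p.2.2 - 1))
  else 0

/-- `Φ₀(x,y,z;t) = Σ_{k,n,s≥1} G₀(k,n,s;t) x^{k−n−s} y^{n−s} z^{2(s−1)}`. -/
def Phi0 (x y z t : ℂ) : ℂ := ∑' p : ℕ × ℕ × ℕ, Phi0Term x y z p t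

/-- The shifted factorial `(a)ₙ = a(a+1)⋯(a+n−1)`. -/
def poch (a : ℂ) (n : ℕ) : ℂ := ∏ j ∈ Finset.range n, (a + j)

/-- The Gauss hypergeometric series `F(a,b,c;t)`. -/
def hypF (a b c t : ℂ) : ℂ :=
  ∑' n : ℕ, poch a n * poch b n / ((n.factorial : ℂ) * poch c n) * t ^ n
private lemma myPoch_ne_zero {s : ℂ} (h : ∀ j : ℕ, s + j ≠ 0) (n : ℕ) : poch s n ≠ 0 :=
  Finset.prod_ne_zero_iff.mpr fun j _ => h j

private lemma my_add_nat_ne_zero_of_re_pos {s : ℂ} (h : 0 < s.re) (j : ℕ) : s + j ≠ 0 := by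
  intro hc
  have := congrArg Complex.re hc
  simp at this
  have hj : (0:ℝ) ≤ (j:ℝ) := j.cast_nonneg
  linarith

private lemma my_add_nat_ne_zero_of_re_neg {s : ℂ} (h0 : -1 < s.re) (h1 : s.re < 0) (j : ℕ) :
    s + j ≠ 0 := by
  intro hc
  have := congrArg Complex.re hc
  simp at this
  rcases Nat.eq_zero_or_pos j with rfl | hj
  · simp at this; linarith
  · have hj1 : (1:ℝ) ≤ (j:ℝ) := by exact_mod_cast hj
    linarith

private lemma my_ne_neg_nat_of_re_neg {s : ℂ} (h0 : -1 < s.re) (h1 : s.re < 0) (n : ℕ) :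
    s ≠ -n := by
  intro hc
  have := congrArg Complex.re hc
  simp at this
  rcases Nat.eq_zero_or_pos n with rfl | hn
  · simp at this; linarith
  · have hn1 : (1:ℝ) ≤ (n:ℝ) := by exact_mod_cast hn
    linarith

private lemma my_identity (x y : ℂ) (hrex : x.re < 0) (hrey0 : 0 < y.re) (hrey1 : y.re < 1)
    (m : ℕ) (hm : 1 ≤ m) :
    poch (-y/2) (m+1) * poch ((1-x-y)/2) (m+1) / (((m+1).factorial : ℂ) * poch ((1-x)/2) (m+1))
      = (m:ℂ)^(-y) * (Complex.GammaSeq ((1-x)/2) m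
          / (Complex.GammaSeq (-y/2) m * Complex.GammaSeq ((1-x-y)/2) m)) / ((m:ℂ)+1) := by
  have hare : (-y/2 : ℂ).re = -y.re/2 := by simp [Complex.div_re, Complex.normSq]
  have hbre : ((1-x-y)/2 : ℂ).re = (1-x.re-y.re)/2 := by simp [Complex.div_re, Complex.normSq]
  have hcre : ((1-x)/2 : ℂ).re = (1-x.re)/2 := by simp [Complex.div_re, Complex.normSq]
  have hPa : poch (-y/2) (m+1) ≠ 0 :=
    myPoch_ne_zero (my_add_nat_ne_zero_of_re_neg (by rw [hare]; linarith) (by rw [hare]; linarith)) _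
  have hPb : poch ((1-x-y)/2) (m+1) ≠ 0 :=
    myPoch_ne_zero (my_add_nat_ne_zero_of_re_pos (by rw [hbre]; linarith)) _
  have hPc : poch ((1-x)/2) (m+1) ≠ 0 :=
    myPoch_ne_zero (my_add_nat_ne_zero_of_re_pos (by rw [hcre]; linarith)) _
  have hm0 : (m:ℂ) ≠ 0 := Nat.cast_ne_zero.mpr (by omega)
  have hpow : ∀ s : ℂ, (m:ℂ)^s ≠ 0 := by
    intro s
    rw [Ne, Complex.cpow_eq_zero_iff]
    tauto
  have hfac : (m.factorial : ℂ) ≠ 0 := Nat.cast_ne_zero.mpr m.factorial_ne_zero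
  have hm1 : ((m:ℂ)+1) ≠ 0 := by
    intro hc; have := congrArg Complex.re hc; simp at this
    have h0 : (0:ℝ) ≤ (m:ℝ) := m.cast_nonneg; linarith
  have hGS : ∀ s : ℂ, Complex.GammaSeq s m = (m:ℂ)^s * m.factorial / poch s (m+1) := fun _ => rfl
  have hcpa : (m:ℂ)^(-y/2 : ℂ) * (m:ℂ)^((1-x-y)/2 : ℂ) = (m:ℂ)^(-y) * (m:ℂ)^((1-x)/2 : ℂ) := by
    rw [← Complex.cpow_add _ _ hm0, ← Complex.cpow_add _ _ hm0]
    congr 1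
    ring
  have hGSa : Complex.GammaSeq (-y/2) m ≠ 0 := by
    rw [hGS]; exact div_ne_zero (mul_ne_zero (hpow _) hfac) hPa
  have hGSb : Complex.GammaSeq ((1-x-y)/2) m ≠ 0 := by
    rw [hGS]; exact div_ne_zero (mul_ne_zero (hpow _) hfac) hPb
  have hfs : ((m+1).factorial : ℂ) = ((m:ℂ)+1) * m.factorial := by
    rw [Nat.factorial_succ]; push_cast; ring
  rw [← mul_div_assoc, div_div, eq_div_iff (mul_ne_zero (mul_ne_zero hGSa hGSb) hm1)]
  rw [hGS, hGS, hGS, hfs]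
  field_simp
  rw [mul_assoc, mul_div_cancel_left₀ _ (by rwa [neg_div] at hPa)]
  rw [neg_div] at hcpa
  exact hcpa

private lemma my_betaInt (x y : ℂ) (hrex : x.re < 0) (hrey1 : y.re < 1) (m : ℕ) :
    IntervalIntegrable (fun s : ℝ => (s:ℂ)^(2*(m:ℂ)-1-x) * (1-(s:ℂ))^(-y))
      MeasureTheory.volume 0 1 := by
  have h1 : (2*(m:ℂ)-1-x) = (2*(m:ℂ)-x) - 1 := by ring
  have h2 : (-y : ℂ) = (1 - y) - 1 := by ring
  rw [h1, h2]
  refine Complex.betaIntegral_convergent ?_ ?_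
  · have h0 : (0:ℝ) ≤ (m:ℝ) := m.cast_nonneg
    simp
    linarith
  · simp
    linarith
private lemma my_J_nonneg (x y : ℂ) (m : ℕ) :
    0 ≤ ∫ s in (0:ℝ)..1, ‖(s:ℂ)^(2*(m:ℂ)-1-x) * (1-(s:ℂ))^(-y)‖ :=
  intervalIntegral.integral_nonneg zero_le_one fun _ _ => norm_nonneg _

private lemma my_Ibound (x y : ℂ) (hrex : x.re < 0) (hrey0 : 0 < y.re) (hrey1 : y.re < 1)
    (m : ℕ) (t : ℝ) (ht : t ∈ Set.Icc (0:ℝ) 1) :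
    ‖∫ s in (0:ℝ)..1, ((s:ℂ)^(2*(m:ℂ)-1-x) * (1-(t:ℂ)*(s:ℂ))^(-y))‖
      ≤ ∫ s in (0:ℝ)..1, ‖(s:ℂ)^(2*(m:ℂ)-1-x) * (1-(s:ℂ))^(-y)‖ := by
  have hae : ∀ᵐ (s:ℝ) ∂(MeasureTheory.volume.restrict (Set.uIoc (0:ℝ) 1)),
      ‖(s:ℂ)^(2*(m:ℂ)-1-x) * (1-(t:ℂ)*(s:ℂ))^(-y)‖
        ≤ ‖(s:ℂ)^(2*(m:ℂ)-1-x) * (1-(s:ℂ))^(-y)‖ := by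
    have h1 : ∀ᵐ s ∂(MeasureTheory.volume.restrict (Set.uIoc (0:ℝ) 1)),
        s ∈ Set.uIoc (0:ℝ) 1 := MeasureTheory.ae_restrict_mem measurableSet_uIoc
    have h2' : ∀ᵐ (s:ℝ) ∂MeasureTheory.volume, s ≠ 1 := by
      rw [MeasureTheory.ae_iff]
      simpa using Real.volume_singleton
    have h2 : ∀ᵐ (s:ℝ) ∂(MeasureTheory.volume.restrict (Set.uIoc (0:ℝ) 1)), s ≠ 1 :=
      MeasureTheory.ae_mono MeasureTheory.Measure.restrict_le_self h2'
    filter_upwards [h1, h2] with s hs hs1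
    rw [Set.uIoc_of_le zero_le_one] at hs
    have hs0 : 0 < s := hs.1
    have hslt : s < 1 := lt_of_le_of_ne hs.2 hs1
    have hts : t*s ≤ s := by nlinarith [ht.1, ht.2]
    have hts0 : 0 < 1 - t*s := by linarith
    have h1s : 0 < 1 - s := by linarith
    rw [norm_mul, norm_mul]
    refine mul_le_mul_of_nonneg_left ?_ (norm_nonneg _)
    have e1 : (1 - (t:ℂ)*(s:ℂ)) = ((1 - t*s : ℝ) : ℂ) := by push_cast; ring
    have e2 : (1 - (s:ℂ)) = ((1 - s : ℝ) : ℂ) := by push_cast; ring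
    rw [e1, e2,
      Complex.norm_cpow_eq_rpow_re_of_pos hts0, Complex.norm_cpow_eq_rpow_re_of_pos h1s]
    exact Real.rpow_le_rpow_of_nonpos h1s (by linarith)
      (by rw [Complex.neg_re]; linarith)
  have key := intervalIntegral.norm_integral_le_abs_of_norm_le hae
    ((my_betaInt x y hrex hrey1 m).norm)
  rwa [_root_.abs_of_nonneg (my_J_nonneg x y m)] at key

private lemma my_Jmono (x y : ℂ) (hrex : x.re < 0) (hrey1 : y.re < 1) (m : ℕ) (hm : 1 ≤ m) :
    (∫ s in (0:ℝ)..1, ‖(s:ℂ)^(2*(m:ℂ)-1-x) * (1-(s:ℂ))^(-y)‖)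
      ≤ ∫ s in (0:ℝ)..1, ‖(s:ℂ)^(2*(1:ℕ)-1-x) * (1-(s:ℂ))^(-y)‖ := by
  refine intervalIntegral.integral_mono_on zero_le_one
    ((my_betaInt x y hrex hrey1 m).norm) ((my_betaInt x y hrex hrey1 1).norm) ?_
  intro s hs
  rcases eq_or_lt_of_le hs.1 with h | h
  · have hne : (2*(m:ℂ)-1-x) ≠ 0 := by
      intro hc
      have := congrArg Complex.re hc
      simp at this
      have h0 : (0:ℝ) ≤ (m:ℝ) := m.cast_nonneg
      have h1 : (1:ℝ) ≤ (m:ℝ) := by exact_mod_cast hm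
      linarith
    rw [← h]
    push_cast
    rw [Complex.zero_cpow hne]
    simpa using norm_nonneg _
  · rw [norm_mul, norm_mul]
    refine mul_le_mul_of_nonneg_right ?_ (norm_nonneg _)
    rw [
      Complex.norm_cpow_eq_rpow_re_of_pos h, Complex.norm_cpow_eq_rpow_re_of_pos h]
    refine Real.rpow_le_rpow_of_exponent_ge h hs.2 ?_
    have h1 : (1:ℝ) ≤ (m:ℝ) := by exact_mod_cast hm
    simp
    linarith
private lemma my_summable (x y : ℂ) (hrex : x.re < 0) (hrey0 : 0 < y.re) (hrey1 : y.re < 1) :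
    Summable (fun m : ℕ =>
      ‖poch (-y/2) m * poch ((1-x-y)/2) m / ((m.factorial:ℂ) * poch ((1-x)/2) m)‖
        * (∫ s in (0:ℝ)..1, ‖(s:ℂ)^(2*(m:ℂ)-1-x) * (1-(s:ℂ))^(-y)‖)) := by
  have hare : (-y/2 : ℂ).re = -y.re/2 := by simp [Complex.div_re, Complex.normSq]
  have hbre : ((1-x-y)/2 : ℂ).re = (1-x.re-y.re)/2 := by simp [Complex.div_re, Complex.normSq]
  set J1 : ℝ := ∫ s in (0:ℝ)..1, ‖(s:ℂ)^(2*((1:ℕ):ℂ)-1-x) * (1-(s:ℂ))^(-y)‖ with hJ1def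
  have hJ1 : 0 ≤ J1 := my_J_nonneg x y 1
  -- the Gamma-limiting constant
  have hGa : Complex.Gamma (-y/2) ≠ 0 :=
    Complex.Gamma_ne_zero (my_ne_neg_nat_of_re_neg (by rw [hare]; linarith) (by rw [hare]; linarith))
  have hGb : Complex.Gamma ((1-x-y)/2) ≠ 0 :=
    Complex.Gamma_ne_zero_of_re_pos (by rw [hbre]; linarith)
  set L : ℝ := ‖Complex.Gamma ((1-x)/2)
      / (Complex.Gamma (-y/2) * Complex.Gamma ((1-x-y)/2))‖ with hLdef
  have hL0 : 0 ≤ L := norm_nonneg _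
  have hq : Tendsto (fun m : ℕ => ‖Complex.GammaSeq ((1-x)/2) m
      / (Complex.GammaSeq (-y/2) m * Complex.GammaSeq ((1-x-y)/2) m)‖) atTop (nhds L) :=
    ((Complex.GammaSeq_tendsto_Gamma ((1-x)/2)).div
      (((Complex.GammaSeq_tendsto_Gamma (-y/2)).mul
        (Complex.GammaSeq_tendsto_Gamma ((1-x-y)/2)))) (mul_ne_zero hGa hGb)).norm
  have hqlt : ∀ᶠ m in atTop, ‖Complex.GammaSeq ((1-x)/2) m
      / (Complex.GammaSeq (-y/2) m * Complex.GammaSeq ((1-x-y)/2) m)‖ < L + 1 :=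
    hq.eventually (gt_mem_nhds (lt_add_one L))
  rw [← summable_nat_add_iff 1]
  refine Summable.of_norm_bounded_eventually_nat
    (g := fun m : ℕ => ((L+1) * J1) * (m:ℝ)^(-(1+y.re))) ?_ ?_
  · exact (Real.summable_nat_rpow.mpr (by linarith)).mul_left _
  · filter_upwards [hqlt, eventually_ge_atTop 1] with m hqm hm1
    have hmR : (1:ℝ) ≤ (m:ℝ) := by exact_mod_cast hm1
    have hmpos : (0:ℝ) < (m:ℝ) := by linarith
    have hterm0 : (0:ℝ) ≤ ‖poch (-y/2) (m+1) * poch ((1-x-y)/2) (m+1)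
        / (((m+1).factorial:ℂ) * poch ((1-x)/2) (m+1))‖
          * (∫ s in (0:ℝ)..1, ‖(s:ℂ)^(2*((m+1:ℕ):ℂ)-1-x) * (1-(s:ℂ))^(-y)‖) :=
      mul_nonneg (norm_nonneg _) (my_J_nonneg x y (m+1))
    rw [Real.norm_of_nonneg hterm0]
    -- step 1 : replace the integral by J1
    have step1 : ‖poch (-y/2) (m+1) * poch ((1-x-y)/2) (m+1)
        / (((m+1).factorial:ℂ) * poch ((1-x)/2) (m+1))‖
          * (∫ s in (0:ℝ)..1, ‖(s:ℂ)^(2*((m+1:ℕ):ℂ)-1-x) * (1-(s:ℂ))^(-y)‖)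
        ≤ ‖poch (-y/2) (m+1) * poch ((1-x-y)/2) (m+1)
        / (((m+1).factorial:ℂ) * poch ((1-x)/2) (m+1))‖ * J1 :=
      mul_le_mul_of_nonneg_left (my_Jmono x y hrex hrey1 (m+1) (by omega)) (norm_nonneg _)
    refine step1.trans ?_
    -- step 2 : compute the norm of the coefficient
    have hnorm : ‖poch (-y/2) (m+1) * poch ((1-x-y)/2) (m+1)
        / (((m+1).factorial:ℂ) * poch ((1-x)/2) (m+1))‖
        = (m:ℝ)^(-y.re) * ‖Complex.GammaSeq ((1-x)/2) m
            / (Complex.GammaSeq (-y/2) m * Complex.GammaSeq ((1-x-y)/2) m)‖ / ((m:ℝ)+1) := by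
      rw [my_identity x y hrex hrey0 hrey1 m hm1]
      rw [norm_div, norm_mul]
      congr 1
      · congr 1
        have e1 : (m:ℂ) = ((m:ℝ):ℂ) := by push_cast; rfl
        rw [e1, Complex.norm_cpow_eq_rpow_re_of_pos hmpos,
          Complex.neg_re]
      · have e2 : ((m:ℂ)+1) = (((m:ℝ)+1 : ℝ):ℂ) := by push_cast; rfl
        rw [e2, Complex.norm_real, Real.norm_of_nonneg (by linarith)]
    rw [hnorm]
    -- step 3 : the final numeric estimate
    have hrw : (m:ℝ)^(-(1+y.re)) = (m:ℝ)^(-y.re) * ((m:ℝ))⁻¹ := by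
      rw [show -(1+y.re) = -y.re + (-1) by ring, Real.rpow_add hmpos, Real.rpow_neg_one]
    rw [hrw]
    have hdiv : ‖Complex.GammaSeq ((1-x)/2) m
        / (Complex.GammaSeq (-y/2) m * Complex.GammaSeq ((1-x-y)/2) m)‖ / ((m:ℝ)+1)
        ≤ (L+1) / (m:ℝ) :=
      div_le_div₀ (by linarith) hqm.le hmpos (by linarith)
    calc (m:ℝ)^(-y.re) * ‖Complex.GammaSeq ((1-x)/2) m
          / (Complex.GammaSeq (-y/2) m * Complex.GammaSeq ((1-x-y)/2) m)‖ / ((m:ℝ)+1) * J1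
        ≤ (m:ℝ)^(-y.re) * ((L+1) / (m:ℝ)) * J1 := by
          rw [mul_div_assoc]
          exact mul_le_mul_of_nonneg_right
            (mul_le_mul_of_nonneg_left hdiv (Real.rpow_nonneg hmpos.le _)) hJ1
      _ = (L+1) * J1 * ((m:ℝ)^(-y.re) * ((m:ℝ))⁻¹) := by
          field_simp

/-- The series `Σ_m t^{2m} ((−y/2)ₘ((1−x−y)/2)ₘ/(m!((1−x)/2)ₘ)) ∫₀¹ s^{2m−1−x}(1−ts)^{−y} ds`
converges uniformly for `t ∈ [0,1]`, when `Re x < 0` and `0 < Re y < 1`. -/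
theorem series_unif_conv_on_Icc (x y : ℂ) (hrex : x.re < 0)
    (hrey0 : 0 < y.re) (hrey1 : y.re < 1) :
    TendstoUniformlyOn
      (fun (N : ℕ) (t : ℝ) => ∑ m ∈ Finset.range N,
        (t : ℂ) ^ (2 * m)
          * (poch (-y / 2) m * poch ((1 - x - y) / 2) m
              / ((m.factorial : ℂ) * poch ((1 - x) / 2) m))
          * ∫ s in (0 : ℝ)..1,
              ((s : ℂ) ^ (2 * (m : ℂ) - 1 - x) * (1 - (t : ℂ) * (s : ℂ)) ^ (-y)))
      (fun t : ℝ => ∑' m : ℕ,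
        (t : ℂ) ^ (2 * m)
          * (poch (-y / 2) m * poch ((1 - x - y) / 2) m
              / ((m.factorial : ℂ) * poch ((1 - x) / 2) m))
          * ∫ s in (0 : ℝ)..1,
              ((s : ℂ) ^ (2 * (m : ℂ) - 1 - x) * (1 - (t : ℂ) * (s : ℂ)) ^ (-y)))
      atTop (Set.Icc (0 : ℝ) 1) := by
  refine tendstoUniformlyOn_tsum_nat (my_summable x y hrex hrey0 hrey1) ?_
  intro m t ht
  have h1 : ‖(t:ℂ)^(2*m)‖ ≤ 1 := by
    rw [norm_pow, Complex.norm_real, Real.norm_eq_abs]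
    exact pow_le_one₀ (abs_nonneg t) (abs_le.mpr ⟨by linarith [ht.1], ht.2⟩)
  have h2 := my_Ibound x y hrex hrey0 hrey1 m t ht
  rw [norm_mul, norm_mul]
  have key : ‖(t:ℂ)^(2*m)‖
        * ‖poch (-y/2) m * poch ((1-x-y)/2) m / ((m.factorial:ℂ) * poch ((1-x)/2) m)‖
        * ‖∫ s in (0:ℝ)..1, ((s:ℂ)^(2*(m:ℂ)-1-x) * (1-(t:ℂ)*(s:ℂ))^(-y))‖
      ≤ 1 * ‖poch (-y/2) m * poch ((1-x-y)/2) m / ((m.factorial:ℂ) * poch ((1-x)/2) m)‖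
        * (∫ s in (0:ℝ)..1, ‖(s:ℂ)^(2*(m:ℂ)-1-x) * (1-(s:ℂ))^(-y)‖) := by
    gcongr
  simpa using key


end
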